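/- Projection of the Vandermonde: with P_a f(x) = (1/r)∑_{j=0}^{r−1} ω_r^{−ja} f(ω_r^j x) applied in each variable, P_{a_1,…,a_N} ∏_{I>J}(x_I − x_J) = δ_{a_1,…,a_N} ∏_I x_I^{a_I mod r} ∏_{μ=0}^{r−1} ∏_{i>j} (x_{I_{μ,i}}^r − x_{I_{μ,j}}^r), where I_{μ,i} is the i-th index I with a_I ≡ μ (mod r), and δ_{a_1,…,a_N} is the sign of the map σ(I_{μ,i}) = 1 + r(i−1) + μ if it is a permutation of {1,…,N}, and 0 otherwise. -/

import Mathlib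

open MvPolynomial

/-- ω_r = e^{2πi/r} -/
noncomputable def omegaR (r : ℕ) : ℂ := Complex.exp (2 * Real.pi * Complex.I / r)

/-- the combined projection P_{a_1,…,a_N}, applying
P_{a_I} f(x) = (1/r) ∑_j ω_r^{-j a_I} f(ω_r^j x) in the variable x_I for each I. -/
noncomputable def proj (r N : ℕ) (a : Fin N → ℤ) (f : MvPolynomial (Fin N) ℂ) :
    MvPolynomial (Fin N) ℂ :=
  C (1 / (r : ℂ) ^ N) *
    ∑ j : Fin N → Fin r,
      C (∏ I : Fin N, omegaR r ^ (-(j I : ℤ) * a I)) *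
        aeval (fun I => (C (omegaR r ^ (j I : ℕ)) * X I : MvPolynomial (Fin N) ℂ)) f

/-- the sign δ_{a_1,…,a_N}: the sign of the map σ(I_{μ,i}) = 1 + r(i−1) + μ (with I_{μ,i} the
i-th index I with a_I ≡ μ mod r) if it is a permutation of {1,…,N}, and 0 otherwise. -/
noncomputable def deltaA (r N : ℕ) (a : Fin N → ℤ) : ℂ :=
  letI := Classical.propDecidable
  let s : Fin N → ℕ := fun I =>
    r * (Finset.univ.filter fun J : Fin N => J ≤ I ∧ a J % r = a I % r).card - r
      + (a I % r).toNat
  if h : ∀ I, s I < N then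
    if hb : Function.Bijective (fun I : Fin N => (⟨s I, h I⟩ : Fin N)) then
      ((Equiv.Perm.sign (Equiv.ofBijective _ hb) : ℤ) : ℂ)
    else 0
  else 0

namespace VPAux

open Finset Equiv

/-- the ranking function from `deltaA`, as a standalone definition. -/
noncomputable def sN (r N : ℕ) (a : Fin N → ℤ) : Fin N → ℕ :=
  letI := Classical.propDecidable
  fun I =>
    r * (Finset.univ.filter fun J : Fin N => J ≤ I ∧ a J % r = a I % r).card - r
      + (a I % r).toNat

lemma deltaA_def (r N : ℕ) (a : Fin N → ℤ) :
    deltaA r N a =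
      (letI := Classical.propDecidable
      if h : ∀ I, sN r N a I < N then
        if hb : Function.Bijective (fun I : Fin N => (⟨sN r N a I, h I⟩ : Fin N)) then
          ((Equiv.Perm.sign (Equiv.ofBijective _ hb) : ℤ) : ℂ)
        else 0
      else 0) := rfl

/-- `Tset r a I` : the set of indices below `I` in the residue class of `I`. -/
def Tset (r : ℕ) {N : ℕ} (a : Fin N → ℤ) (I : Fin N) : Finset (Fin N) :=
  Finset.univ.filter fun J : Fin N => J ≤ I ∧ a J % r = a I % r

lemma sN_eq (r N : ℕ) (a : Fin N → ℤ) (I : Fin N) :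
    sN r N a I = r * (Tset r a I).card - r + (a I % r).toNat := by
  unfold sN Tset
  rw [Finset.filter_congr_decidable (s := (Finset.univ : Finset (Fin N)))
      (p := fun J => J ≤ I ∧ a J % r = a I % r) (h := fun J => Classical.propDecidable _)]

lemma self_mem_Tset (r : ℕ) {N : ℕ} (a : Fin N → ℤ) (I : Fin N) : I ∈ Tset r a I := by
  simp [Tset]

lemma Tset_card_pos (r : ℕ) {N : ℕ} (a : Fin N → ℤ) (I : Fin N) : 0 < (Tset r a I).card :=
  Finset.card_pos.mpr ⟨I, self_mem_Tset r a I⟩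

lemma muLt (r : ℕ) (hr : 0 < r) {N : ℕ} (a : Fin N → ℤ) (I : Fin N) :
    (a I % r).toNat < r := by
  have h1 : (0:ℤ) < (r:ℤ) := by exact_mod_cast hr
  have h2 := Int.emod_nonneg (a I) (by omega : (r:ℤ) ≠ 0)
  have h3 := Int.emod_lt_of_pos (a I) h1
  omega

lemma sN_mod (r N : ℕ) (hr : 0 < r) (a : Fin N → ℤ) (I : Fin N) :
    sN r N a I % r = (a I % r).toNat := by
  rw [sN_eq]
  have hc := Tset_card_pos r a I
  obtain ⟨d, hd⟩ := Nat.exists_eq_add_of_le hc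
  rw [hd, Nat.mul_add, Nat.mul_one]
  have hμ := muLt r hr a I
  have h1 : r + r * d - r + (a I % r).toNat = r * d + (a I % r).toNat := by omega
  rw [h1, Nat.mul_add_mod, Nat.mod_eq_of_lt hμ]

lemma amod_cast (r : ℕ) (hr : 0 < r) {N : ℕ} (a : Fin N → ℤ) (I : Fin N) :
    a I % r = (((a I % r).toNat : ℕ) : ℤ) := by
  have h2 := Int.emod_nonneg (a I) (by positivity : (r:ℤ) ≠ 0)
  omega

lemma Tset_card_lt (r : ℕ) (hr : 0 < r) {N : ℕ} (a : Fin N → ℤ) {I J : Fin N}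
    (hcl : a I % r = a J % r) (hIJ : I < J) : (Tset r a I).card < (Tset r a J).card := by
  apply Finset.card_lt_card
  constructor
  · intro K hK
    simp only [Tset, Finset.mem_filter] at hK ⊢
    exact ⟨hK.1, le_trans hK.2.1 (le_of_lt hIJ), by rw [hK.2.2, hcl]⟩
  · intro hsub
    have := hsub (self_mem_Tset r a J)
    simp only [Tset, Finset.mem_filter] at this
    exact absurd (lt_of_lt_of_le hIJ this.2.1) (lt_irrefl I)

lemma sN_inj (r N : ℕ) (hr : 0 < r) (a : Fin N → ℤ) :
    Function.Injective (sN r N a) := by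
  intro I J hIJ
  have hmodI := sN_mod r N hr a I
  have hmodJ := sN_mod r N hr a J
  have hμ : (a I % r).toNat = (a J % r).toNat := by rw [← hmodI, ← hmodJ, hIJ]
  have hcl : a I % r = a J % r := by
    rw [amod_cast r hr a I, amod_cast r hr a J, hμ]
  by_contra hne
  rcases lt_trichotomy I J with hlt | heq | hgt
  · have hlt2 := Tset_card_lt r hr a hcl hlt
    rw [sN_eq, sN_eq, hμ] at hIJ
    have h1 := Tset_card_pos r a I
    have h2 := Tset_card_pos r a J
    have hle1 : r ≤ r * (Tset r a I).card := Nat.le_mul_of_pos_right r h1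
    have hle2 : r ≤ r * (Tset r a J).card := Nat.le_mul_of_pos_right r h2
    have : r * (Tset r a I).card = r * (Tset r a J).card := by omega
    have := Nat.eq_of_mul_eq_mul_left hr this
    omega
  · exact hne heq
  · have hlt2 := Tset_card_lt r hr a hcl.symm hgt
    rw [sN_eq, sN_eq, hμ] at hIJ
    have h1 := Tset_card_pos r a I
    have h2 := Tset_card_pos r a J
    have hle1 : r ≤ r * (Tset r a I).card := Nat.le_mul_of_pos_right r h1
    have hle2 : r ≤ r * (Tset r a J).card := Nat.le_mul_of_pos_right r h2
    have : r * (Tset r a I).card = r * (Tset r a J).card := by omega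
    have := Nat.eq_of_mul_eq_mul_left hr this
    omega

/-- arithmetic lemma: a set of `> t` naturals, all `< n` and all `≡ ν mod r`,
forces `r * t + ν < n`. -/
lemma natprog {r ν n t : ℕ} (hr : 0 < r) (S : Finset ℕ)
    (hS : ∀ k ∈ S, k % r = ν ∧ k < n) (ht : t < S.card) : r * t + ν < n := by
  classical
  have hinj : Set.InjOn (· / r) S := by
    intro x hx y hy hxy
    have hx' := (hS x hx).1
    have hy' := (hS y hy).1
    have e1 : r * (x / r) + x % r = x := Nat.div_add_mod x r
    have e2 : r * (y / r) + y % r = y := Nat.div_add_mod y r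
    simp only at hxy
    rw [hxy] at e1
    omega
  have hTcard : (S.image (· / r)).card = S.card := Finset.card_image_of_injOn hinj
  have hex : ∃ s ∈ S.image (· / r), t ≤ s := by
    by_contra hcon
    push_neg at hcon
    have hsub : S.image (· / r) ⊆ Finset.range t := fun s hs =>
      Finset.mem_range.mpr (hcon s hs)
    have := Finset.card_le_card hsub
    rw [hTcard, Finset.card_range] at this
    omega
  obtain ⟨s, hsT, hts⟩ := hex
  obtain ⟨k, hkS, rfl⟩ := Finset.mem_image.mp hsT
  have h1 := (hS k hkS).1
  have h2 := (hS k hkS).2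
  have e1 : r * (k / r) + k % r = k := Nat.div_add_mod k r
  have : r * t ≤ r * (k / r) := Nat.mul_le_mul_left r hts
  omega

/-- if some permutation survives the projection, then `sN` lands in `Fin N`. -/
lemma surv_imp_lt (r N : ℕ) (hr : 0 < r) (a : Fin N → ℤ) (σ : Equiv.Perm (Fin N))
    (hσ : ∀ i : Fin N, ((i : ℕ) : ℤ) % r = a (σ i) % r) : ∀ I, sN r N a I < N := by
  intro I
  rw [sN_eq]
  set ν := (a I % r).toNat with hν
  set S := (Tset r a I).image (fun J => ((σ.symm J : Fin N) : ℕ)) with hS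
  have hcard : S.card = (Tset r a I).card := by
    apply Finset.card_image_of_injOn
    intro x _ y _ hxy
    have : σ.symm x = σ.symm y := Fin.ext hxy
    exact σ.symm.injective this
  have hprop : ∀ k ∈ S, k % r = ν ∧ k < N := by
    intro k hk
    obtain ⟨J, hJ, rfl⟩ := Finset.mem_image.mp hk
    refine ⟨?_, Fin.is_lt _⟩
    have h1 := hσ (σ.symm J)
    rw [Equiv.apply_symm_apply] at h1
    simp only [Tset, Finset.mem_filter] at hJ
    have h2 : (((σ.symm J : Fin N) : ℕ) : ℤ) % r = a I % r := by rw [h1, hJ.2.2]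
    have h3 : ((((σ.symm J : Fin N) : ℕ) % r : ℕ) : ℤ) = (((σ.symm J : Fin N) : ℕ) : ℤ) % (r:ℤ) :=
      Int.natCast_emod _ _
    have h4 := amod_cast r hr a I
    omega
  have hc := Tset_card_pos r a I
  have ht : (Tset r a I).card - 1 < S.card := by omega
  have hlt := natprog hr S hprop ht
  obtain ⟨d, hd0⟩ := Nat.exists_eq_add_of_le hc
  have hd : (Tset r a I).card = 1 + d := by omega
  have e1 : r * (Tset r a I).card = r + r * d := by rw [hd, Nat.mul_add, Nat.mul_one]
  have e2 : (Tset r a I).card - 1 = d := by omega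
  rw [e2] at hlt
  omega

/-- the block-diagonal projected matrix. -/
noncomputable def Amat (r N : ℕ) (a : Fin N → ℤ) :
    Matrix (Fin N) (Fin N) (MvPolynomial (Fin N) ℂ) :=
  Matrix.of fun I k =>
    if ((k : ℕ) : ℤ) % r = a I % r then (X I : MvPolynomial (Fin N) ℂ) ^ (k : ℕ) else 0

section Scalar

lemma omega_ne_zero (r : ℕ) : omegaR r ≠ 0 := Complex.exp_ne_zero _

lemma rootsum (r : ℕ) (hr : 0 < r) (m : ℤ) :
    ∑ x : Fin r, omegaR r ^ ((x : ℤ) * m) = if (r:ℤ) ∣ m then (r:ℂ) else 0 := by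
  have hprim : IsPrimitiveRoot (omegaR r) r := Complex.isPrimitiveRoot_exp r hr.ne'
  have hrew : ∀ x : Fin r, omegaR r ^ ((x:ℤ) * m) = (omegaR r ^ m) ^ (x : ℕ) := by
    intro x
    rw [mul_comm, zpow_mul, ← zpow_natCast (omegaR r ^ m)]
  simp only [hrew]
  rw [Fin.sum_univ_eq_sum_range (fun i => (omegaR r ^ m) ^ i) r]
  by_cases hdvd : (r:ℤ) ∣ m
  · have h1 : omegaR r ^ m = 1 := (hprim.zpow_eq_one_iff_dvd m).mpr hdvd
    simp [h1, hdvd]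
  · have h1 : omegaR r ^ m ≠ 1 := fun hc => hdvd ((hprim.zpow_eq_one_iff_dvd m).mp hc)
    rw [geom_sum_eq h1, if_neg hdvd]
    have h2 : (omegaR r ^ m) ^ r = 1 := by
      rw [← zpow_natCast (omegaR r ^ m), ← zpow_mul, mul_comm, zpow_mul, zpow_natCast,
        hprim.pow_eq_one, one_zpow]
    rw [h2]
    simp

end Scalar

lemma modiff {n x y : ℤ} : x % n = y % n ↔ n ∣ x - y := by
  rw [Int.emod_eq_emod_iff_emod_sub_eq_zero, Int.dvd_iff_emod_eq_zero]

lemma pairsProd {n : ℕ} {M : Type*} [CommMonoid M] (f : Fin n × Fin n → M) :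
    ∏ i : Fin n, ∏ j ∈ Finset.Ioi i, f (j, i)
      = ∏ q ∈ Finset.univ.filter (fun q : Fin n × Fin n => q.2 < q.1), f q := by
  rw [Finset.prod_sigma']
  refine Finset.prod_bij' (fun x _ => (x.2, x.1)) (fun q _ => ⟨q.2, q.1⟩) ?_ ?_ ?_ ?_ ?_
  · intro x hx
    simp only [Finset.mem_sigma, Finset.mem_univ, Finset.mem_Ioi] at hx
    simp only [Finset.mem_filter, Finset.mem_univ, true_and]
    exact hx.2
  · intro q hq
    simp only [Finset.mem_filter, Finset.mem_univ, true_and] at hq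
    simp only [Finset.mem_sigma, Finset.mem_univ, Finset.mem_Ioi, true_and]
    exact hq
  · intro x _; rfl
  · intro q _; rfl
  · intro x _; rfl

/-- STEP 1: the projection of the Vandermonde is the determinant of `Amat`. -/
lemma proj_eq_det (r N : ℕ) (hr : 0 < r) (a : Fin N → ℤ) :
    proj r N a
        (∏ q ∈ Finset.univ.filter (fun q : Fin N × Fin N => q.2 < q.1), (X q.1 - X q.2)) =
      (Amat r N a).det := by
  classical
  have hω : omegaR r ≠ 0 := omega_ne_zero r
  have hrC : ((r:ℕ):ℂ) ≠ 0 := Nat.cast_ne_zero.mpr hr.ne'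
  have hV : (∏ q ∈ Finset.univ.filter (fun q : Fin N × Fin N => q.2 < q.1),
        ((X q.1 : MvPolynomial (Fin N) ℂ) - X q.2))
      = ∑ σ : Equiv.Perm (Fin N), ((Equiv.Perm.sign σ : ℤ) : MvPolynomial (Fin N) ℂ)
          * ∏ i : Fin N, X (σ i) ^ (i : ℕ) := by
    rw [← pairsProd (fun q => (X q.1 : MvPolynomial (Fin N) ℂ) - X q.2),
      ← Matrix.det_vandermonde (X : Fin N → MvPolynomial (Fin N) ℂ), Matrix.det_apply']
    rfl
  rw [Matrix.det_apply']
  unfold proj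
  rw [hV]
  -- expand the aeval of the permutation sum
  have e1 : ∀ j : Fin N → Fin r,
      C (∏ I, omegaR r ^ (-(j I : ℤ) * a I)) *
        (aeval fun I => (C (omegaR r ^ ((j I : ℕ))) * X I : MvPolynomial (Fin N) ℂ))
          (∑ σ : Equiv.Perm (Fin N), ((Equiv.Perm.sign σ : ℤ) : MvPolynomial (Fin N) ℂ)
            * ∏ i : Fin N, X (σ i) ^ (i:ℕ))
      = ∑ σ : Equiv.Perm (Fin N), ((Equiv.Perm.sign σ : ℤ) : MvPolynomial (Fin N) ℂ)
          * (C ((∏ I, omegaR r ^ (-(j I : ℤ) * a I))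
                * ∏ i : Fin N, omegaR r ^ ((j (σ i) : ℕ) * (i:ℕ)))
             * ∏ i : Fin N, X (σ i) ^ (i:ℕ)) := by
    intro j
    rw [map_sum, Finset.mul_sum]
    refine Finset.sum_congr rfl fun σ _ => ?_
    rw [map_mul, map_intCast]
    have h1 : ∀ i ∈ (Finset.univ : Finset (Fin N)),
        (aeval fun I => (C (omegaR r ^ ((j I : ℕ))) * X I : MvPolynomial (Fin N) ℂ))
          ((X (σ i) : MvPolynomial (Fin N) ℂ) ^ (i:ℕ))
        = C (omegaR r ^ ((j (σ i) : ℕ) * (i:ℕ))) * X (σ i) ^ (i:ℕ) := by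
      intro i _
      rw [map_pow, aeval_X, mul_pow, ← C_pow, ← pow_mul]
    have h2 : (aeval fun I => (C (omegaR r ^ ((j I : ℕ))) * X I : MvPolynomial (Fin N) ℂ))
          (∏ i : Fin N, (X (σ i) : MvPolynomial (Fin N) ℂ) ^ (i:ℕ))
        = C (∏ i : Fin N, omegaR r ^ ((j (σ i) : ℕ) * (i:ℕ)))
            * ∏ i : Fin N, (X (σ i) : MvPolynomial (Fin N) ℂ) ^ (i:ℕ) := by
      rw [map_prod, Finset.prod_congr rfl h1, Finset.prod_mul_distrib, ← map_prod]
    rw [h2, map_mul]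
    ring
  rw [Finset.sum_congr rfl (fun j _ => e1 j), Finset.sum_comm, Finset.mul_sum]
  refine Finset.sum_congr rfl fun σ _ => ?_
  -- pull the scalar sum together
  have e2 : ∑ j : Fin N → Fin r, ((Equiv.Perm.sign σ : ℤ) : MvPolynomial (Fin N) ℂ)
          * (C ((∏ I, omegaR r ^ (-(j I : ℤ) * a I))
                * ∏ i : Fin N, omegaR r ^ ((j (σ i) : ℕ) * (i:ℕ)))
             * ∏ i : Fin N, X (σ i) ^ (i:ℕ))
      = ((Equiv.Perm.sign σ : ℤ) : MvPolynomial (Fin N) ℂ)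
          * (C (∑ j : Fin N → Fin r, (∏ I, omegaR r ^ (-(j I : ℤ) * a I))
                * ∏ i : Fin N, omegaR r ^ ((j (σ i) : ℕ) * (i:ℕ)))
             * ∏ i : Fin N, X (σ i) ^ (i:ℕ)) := by
    rw [← Finset.mul_sum, map_sum, Finset.sum_mul]
  rw [e2]
  -- compute the scalar sum
  have e3 : ∑ j : Fin N → Fin r, (∏ I, omegaR r ^ (-(j I : ℤ) * a I))
                * ∏ i : Fin N, omegaR r ^ ((j (σ i) : ℕ) * (i:ℕ))
      = ∏ i : Fin N, (if (r:ℤ) ∣ ((i:ℕ) - a (σ i) : ℤ) then (r:ℂ) else 0) := by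
    have hw : ∀ j : Fin N → Fin r,
        (∏ I, omegaR r ^ (-(j I : ℤ) * a I))
            * ∏ i : Fin N, omegaR r ^ ((j (σ i) : ℕ) * (i:ℕ))
          = ∏ i : Fin N, omegaR r ^ ((j (σ i) : ℤ) * (((i:ℕ):ℤ) - a (σ i))) := by
      intro j
      rw [← Equiv.prod_comp σ (fun I => omegaR r ^ (-(j I : ℤ) * a I)),
        ← Finset.prod_mul_distrib]
      refine Finset.prod_congr rfl fun i _ => ?_
      rw [← zpow_natCast (omegaR r) ((j (σ i) : ℕ) * (i:ℕ)), ← zpow_add₀ hω]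
      congr 1
      push_cast
      ring
    rw [Finset.sum_congr rfl (fun j _ => hw j)]
    have hb : Function.Bijective (fun (j : Fin N → Fin r) => j ∘ σ) := by
      constructor
      · intro u v huv
        funext I
        have := congrFun huv (σ.symm I)
        simpa using this
      · intro g
        exact ⟨g ∘ σ.symm, by funext i; simp⟩
    rw [show (∑ j : Fin N → Fin r,
          ∏ i : Fin N, omegaR r ^ ((j (σ i) : ℤ) * (((i:ℕ):ℤ) - a (σ i))))
        = ∑ j' : Fin N → Fin r,
          ∏ i : Fin N, omegaR r ^ ((j' i : ℤ) * (((i:ℕ):ℤ) - a (σ i))) from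
      Fintype.sum_bijective _ hb _ _ (fun j => rfl)]
    rw [← Fintype.piFinset_univ,
      ← Finset.prod_univ_sum (fun _ : Fin N => (Finset.univ : Finset (Fin r)))
        (fun i x => omegaR r ^ ((x : ℤ) * (((i:ℕ):ℤ) - a (σ i))))]
    exact Finset.prod_congr rfl fun i _ => rootsum r hr _
  rw [e3]
  by_cases hall : ∀ i : Fin N, (r:ℤ) ∣ ((i:ℕ) - a (σ i) : ℤ)
  · have hprod : ∏ i : Fin N, (if (r:ℤ) ∣ ((i:ℕ) - a (σ i) : ℤ) then (r:ℂ) else 0)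
        = ((r:ℂ)) ^ N := by
      rw [Finset.prod_congr rfl (fun i _ => if_pos (hall i)), Finset.prod_const,
        Finset.card_univ, Fintype.card_fin]
    rw [hprod]
    have hA : ∀ i ∈ (Finset.univ : Finset (Fin N)),
        Amat r N a (σ i) i = (X (σ i) : MvPolynomial (Fin N) ℂ) ^ (i:ℕ) := by
      intro i _
      have hd := hall i
      have : ((i:ℕ):ℤ) % r = a (σ i) % r := modiff.mpr hd
      exact if_pos this
    rw [Finset.prod_congr rfl hA]
    have hC : (1 / (r:ℂ) ^ N) * ((r:ℂ) ^ N) = 1 := by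
      field_simp
    calc C (1 / (r:ℂ) ^ N) * (((Equiv.Perm.sign σ : ℤ) : MvPolynomial (Fin N) ℂ)
            * (C ((r:ℂ) ^ N) * ∏ i : Fin N, X (σ i) ^ (i:ℕ)))
        = ((Equiv.Perm.sign σ : ℤ) : MvPolynomial (Fin N) ℂ)
            * ((C (1 / (r:ℂ) ^ N) * C ((r:ℂ) ^ N)) * ∏ i : Fin N, X (σ i) ^ (i:ℕ)) := by
          ring
      _ = _ := by rw [← map_mul, hC, map_one, one_mul]
  · push_neg at hall
    obtain ⟨i0, hi0⟩ := hall
    have hz1 : ∏ i : Fin N, (if (r:ℤ) ∣ ((i:ℕ) - a (σ i) : ℤ) then (r:ℂ) else 0) = 0 :=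
      Finset.prod_eq_zero (Finset.mem_univ i0) (if_neg hi0)
    have hz2 : ∏ i : Fin N, Amat r N a (σ i) i = 0 := by
      refine Finset.prod_eq_zero (Finset.mem_univ i0) ?_
      have : ¬ (((i0:ℕ):ℤ) % r = a (σ i0) % r) := fun hc => hi0 (modiff.mp hc)
      exact if_neg this
    rw [hz1, hz2, map_zero]
    ring

lemma det_zero (r N : ℕ) (hr : 0 < r) (a : Fin N → ℤ)
    (h : ¬ ∀ I, sN r N a I < N) : (Amat r N a).det = 0 := by
  rw [Matrix.det_apply']
  refine Finset.sum_eq_zero fun σ _ => ?_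
  have hns : ¬ ∀ i : Fin N, ((i:ℕ):ℤ) % r = a (σ i) % r := by
    intro hall
    exact h (surv_imp_lt r N hr a σ hall)
  push_neg at hns
  obtain ⟨i0, hi0⟩ := hns
  have hz : ∏ i : Fin N, Amat r N a (σ i) i = 0 :=
    Finset.prod_eq_zero (Finset.mem_univ i0) (if_neg hi0)
  rw [hz, mul_zero]

section Main

variable (r N : ℕ) (hr : 0 < r) (a : Fin N → ℤ)

/-- residue class of an index. -/
def mres : Fin N → Fin r := fun I => ⟨(a I % r).toNat, muLt r hr a I⟩

/-- residue of a position. -/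
def bres : Fin N → Fin r := fun k => ⟨(k : ℕ) % r, Nat.mod_lt _ hr⟩

/-- the residue class as a finset. -/
def Cset (ν : Fin r) : Finset (Fin N) := Finset.univ.filter fun I => mres r N hr a I = ν

/-- enumeration of a residue class in increasing order. -/
noncomputable def eIso (ν : Fin r) :
    Fin (Cset r N hr a ν).card ≃o {x // x ∈ Cset r N hr a ν} :=
  (Cset r N hr a ν).orderIsoOfFin rfl

lemma mem_Cset {ν : Fin r} {I : Fin N} : I ∈ Cset r N hr a ν ↔ mres r N hr a I = ν := by
  simp [Cset]

lemma amod_mres (I : Fin N) : a I % r = (((mres r N hr a I : Fin r) : ℕ) : ℤ) :=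
  amod_cast r hr a I

lemma mres_eq_iff {I J : Fin N} :
    mres r N hr a I = mres r N hr a J ↔ a I % r = a J % r := by
  constructor
  · intro hh
    rw [amod_mres r N hr a I, amod_mres r N hr a J, hh]
  · intro hh
    apply Fin.ext
    simp only [mres, hh]

lemma sN_rank (ν : Fin r) (j : Fin (Cset r N hr a ν).card) :
    sN r N a (↑(eIso r N hr a ν j) : Fin N) = r * (j:ℕ) + (ν:ℕ) := by
  set I0 : Fin N := (↑(eIso r N hr a ν j) : Fin N) with hI0
  have hI0mem : I0 ∈ Cset r N hr a ν := (eIso r N hr a ν j).2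
  have hμ : mres r N hr a I0 = ν := (mem_Cset r N hr a).mp hI0mem
  have key : ∀ J, J ∈ Tset r a I0 → J ∈ Cset r N hr a ν := by
    intro J hJ
    rw [mem_Cset]
    rw [Tset, Finset.mem_filter] at hJ
    rw [← hμ]
    exact (mres_eq_iff r N hr a).mpr hJ.2.2
  have hcard : (Tset r a I0).card = (Finset.Iic j).card := by
    refine Finset.card_bij' (fun J hJ => (eIso r N hr a ν).symm ⟨J, key J hJ⟩)
      (fun t _ => (↑(eIso r N hr a ν t) : Fin N)) ?_ ?_ ?_ ?_
    · intro J hJ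
      rw [Finset.mem_Iic]
      have hJle : J ≤ I0 := by
        rw [Tset, Finset.mem_filter] at hJ
        exact hJ.2.1
      have hle : (⟨J, key J hJ⟩ : {x // x ∈ Cset r N hr a ν}) ≤ eIso r N hr a ν j :=
        Subtype.coe_le_coe.mp hJle
      have := (eIso r N hr a ν).symm.monotone hle
      rwa [OrderIso.symm_apply_apply] at this
    · intro t ht
      rw [Finset.mem_Iic] at ht
      rw [Tset, Finset.mem_filter]
      refine ⟨Finset.mem_univ _, ?_, ?_⟩
      · exact Subtype.coe_le_coe.mpr ((eIso r N hr a ν).monotone ht)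
      · have h1 : mres r N hr a (↑(eIso r N hr a ν t) : Fin N) = ν :=
          (mem_Cset r N hr a).mp (eIso r N hr a ν t).2
        exact (mres_eq_iff r N hr a).mp (h1.trans hμ.symm)
    · intro J hJ
      simp
    · intro t ht
      simp
  rw [Fin.card_Iic] at hcard
  rw [sN_eq, hcard]
  have h2 : (a I0 % r).toNat = (ν:ℕ) := by rw [← hμ]; rfl
  rw [h2, Nat.mul_succ]
  omega

lemma P1 :
    ∏ ν : Fin r, ∏ i : Fin (Cset r N hr a ν).card,
        (X (↑(eIso r N hr a ν i) : Fin N) : MvPolynomial (Fin N) ℂ) ^ (ν:ℕ)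
      = ∏ I : Fin N, (X I : MvPolynomial (Fin N) ℂ) ^ (a I % r).toNat := by
  have hν : ∀ ν ∈ (Finset.univ : Finset (Fin r)),
      ∏ i : Fin (Cset r N hr a ν).card,
          (X (↑(eIso r N hr a ν i) : Fin N) : MvPolynomial (Fin N) ℂ) ^ (ν:ℕ)
        = ∏ I ∈ Cset r N hr a ν, (X I : MvPolynomial (Fin N) ℂ) ^ (a I % r).toNat := by
    intro ν _
    rw [← Finset.prod_coe_sort (Cset r N hr a ν)
        (fun I => (X I : MvPolynomial (Fin N) ℂ) ^ (a I % r).toNat),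
      ← Equiv.prod_comp (eIso r N hr a ν).toEquiv
        (fun x : {x // x ∈ Cset r N hr a ν} =>
          (X (↑x : Fin N) : MvPolynomial (Fin N) ℂ) ^ (a (↑x : Fin N) % r).toNat)]
    refine Finset.prod_congr rfl fun i _ => ?_
    have h1 : mres r N hr a (↑(eIso r N hr a ν i) : Fin N) = ν :=
      (mem_Cset r N hr a).mp (eIso r N hr a ν i).2
    congr 1
    exact (congrArg Fin.val h1).symm
  rw [Finset.prod_congr rfl hν]
  exact Finset.prod_fiberwise Finset.univ (mres r N hr a)
    (fun I => (X I : MvPolynomial (Fin N) ℂ) ^ (a I % r).toNat)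

lemma P2 :
    ∏ ν : Fin r, ∏ i : Fin (Cset r N hr a ν).card, ∏ j ∈ Finset.Ioi i,
        ((X (↑(eIso r N hr a ν j) : Fin N) : MvPolynomial (Fin N) ℂ) ^ r
          - (X (↑(eIso r N hr a ν i) : Fin N) : MvPolynomial (Fin N) ℂ) ^ r)
      = ∏ q ∈ Finset.univ.filter
            (fun q : Fin N × Fin N => q.2 < q.1 ∧ a q.1 % r = a q.2 % r),
          ((X q.1 : MvPolynomial (Fin N) ℂ) ^ r - (X q.2 : MvPolynomial (Fin N) ℂ) ^ r) := by
  rw [← Finset.prod_fiberwise_of_maps_to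
      (g := fun q : Fin N × Fin N => mres r N hr a q.1)
      (t := (Finset.univ : Finset (Fin r)))
      (fun _ _ => Finset.mem_univ _)
      (fun q => (X q.1 : MvPolynomial (Fin N) ℂ) ^ r - (X q.2 : MvPolynomial (Fin N) ℂ) ^ r)]
  refine Finset.prod_congr rfl fun ν _ => ?_
  rw [pairsProd (fun p : Fin (Cset r N hr a ν).card × Fin (Cset r N hr a ν).card =>
    ((X (↑(eIso r N hr a ν p.1) : Fin N) : MvPolynomial (Fin N) ℂ) ^ r
      - (X (↑(eIso r N hr a ν p.2) : Fin N) : MvPolynomial (Fin N) ℂ) ^ r))]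
  have hmem : ∀ q ∈ (Finset.univ.filter
        (fun q : Fin N × Fin N => q.2 < q.1 ∧ a q.1 % r = a q.2 % r)).filter
        (fun q => mres r N hr a q.1 = ν),
      q.1 ∈ Cset r N hr a ν ∧ q.2 ∈ Cset r N hr a ν := by
    intro q hq
    simp only [Finset.mem_filter, Finset.mem_univ, true_and] at hq
    obtain ⟨⟨hlt, hcls⟩, hν⟩ := hq
    refine ⟨(mem_Cset r N hr a).mpr hν, (mem_Cset r N hr a).mpr ?_⟩
    rw [← hν]
    exact (mres_eq_iff r N hr a).mpr hcls.symm
  refine Finset.prod_bij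
    (fun p _ => ((↑(eIso r N hr a ν p.1) : Fin N), (↑(eIso r N hr a ν p.2) : Fin N)))
    ?_ ?_ ?_ ?_
  · intro p hp
    simp only [Finset.mem_filter, Finset.mem_univ, true_and] at hp ⊢
    refine ⟨⟨?_, ?_⟩, ?_⟩
    · exact Subtype.coe_lt_coe.mpr ((eIso r N hr a ν).strictMono hp)
    · have h1 : mres r N hr a (↑(eIso r N hr a ν p.1) : Fin N) = ν :=
        (mem_Cset r N hr a).mp (eIso r N hr a ν p.1).2
      have h2 : mres r N hr a (↑(eIso r N hr a ν p.2) : Fin N) = ν :=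
        (mem_Cset r N hr a).mp (eIso r N hr a ν p.2).2
      exact (mres_eq_iff r N hr a).mp (h1.trans h2.symm)
    · exact (mem_Cset r N hr a).mp (eIso r N hr a ν p.1).2
  · intro p1 h1 p2 h2 heq
    simp only [Prod.mk.injEq] at heq
    have e1 : p1.1 = p2.1 :=
      (eIso r N hr a ν).injective (Subtype.coe_injective heq.1)
    have e2 : p1.2 = p2.2 :=
      (eIso r N hr a ν).injective (Subtype.coe_injective heq.2)
    exact Prod.ext e1 e2
  · intro q hq
    have hm := hmem q hq
    refine ⟨((eIso r N hr a ν).symm ⟨q.1, hm.1⟩, (eIso r N hr a ν).symm ⟨q.2, hm.2⟩), ?_, ?_⟩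
    · simp only [Finset.mem_filter, Finset.mem_univ, true_and] at hq ⊢
      have hlt : q.2 < q.1 := hq.1.1
      have hlt2 : ((⟨q.2, hm.2⟩ : {x // x ∈ Cset r N hr a ν}) :
          {x // x ∈ Cset r N hr a ν}) < ⟨q.1, hm.1⟩ := Subtype.coe_lt_coe.mp hlt
      exact (eIso r N hr a ν).symm.strictMono hlt2
    · simp
  · intro p hp
    rfl

include hr in
lemma det_main (h : ∀ I, sN r N a I < N)
    (hb : Function.Bijective (fun I : Fin N => (⟨sN r N a I, h I⟩ : Fin N))) :
    (Amat r N a).det =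
      ((Equiv.Perm.sign (Equiv.ofBijective _ hb) : ℤ) : MvPolynomial (Fin N) ℂ)
        * (∏ I : Fin N, (X I : MvPolynomial (Fin N) ℂ) ^ (a I % r).toNat)
        * ∏ q ∈ Finset.univ.filter
            (fun q : Fin N × Fin N => q.2 < q.1 ∧ a q.1 % r = a q.2 % r),
          ((X q.1 : MvPolynomial (Fin N) ℂ) ^ r - (X q.2 : MvPolynomial (Fin N) ℂ) ^ r) := by
  classical
  set σ0 : Equiv.Perm (Fin N) := Equiv.ofBijective _ hb with hσ0
  have hσ0app : ∀ I, σ0 I = (⟨sN r N a I, h I⟩ : Fin N) := fun I => rfl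
  have hσ0val : ∀ I, ((σ0 I : Fin N) : ℕ) = sN r N a I := fun I => rfl
  have hbσ : ∀ I, bres r N hr (σ0 I) = mres r N hr a I := by
    intro I
    apply Fin.ext
    show ((σ0 I : Fin N) : ℕ) % r = (a I % r).toNat
    rw [hσ0val I]
    exact sN_mod r N hr a I
  set B := (Amat r N a).submatrix (⇑σ0.symm) id with hB
  have hBentry : ∀ k l : Fin N, B k l =
      (if ((l:ℕ):ℤ) % r = a (σ0.symm k) % r
        then (X (σ0.symm k) : MvPolynomial (Fin N) ℂ) ^ (l:ℕ) else 0) := fun k l => rfl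
  have hBT : B.BlockTriangular (bres r N hr) := by
    intro k l hlt
    have hne : bres r N hr l ≠ bres r N hr k := ne_of_lt hlt
    show (if ((l:ℕ):ℤ) % r = a (σ0.symm k) % r
        then (X (σ0.symm k) : MvPolynomial (Fin N) ℂ) ^ (l:ℕ) else 0) = 0
    apply if_neg
    intro hc
    apply hne
    have h1 : mres r N hr a (σ0.symm k) = bres r N hr k := by
      rw [← hbσ (σ0.symm k), Equiv.apply_symm_apply]
    have h2 : bres r N hr l = mres r N hr a (σ0.symm k) := by
      apply Fin.ext
      show (l:ℕ) % r = (a (σ0.symm k) % r).toNat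
      have h3 : (((l:ℕ) % r : ℕ) : ℤ) = ((l:ℕ):ℤ) % (r:ℤ) := Int.natCast_emod _ _
      have h4 := amod_cast r hr a (σ0.symm k)
      omega
    rw [h2, h1]
  have hdetB : B.det = ∏ ν : Fin r, (B.toSquareBlock (bres r N hr) ν).det :=
    hBT.det_fintype
  have hblock : ∀ ν ∈ (Finset.univ : Finset (Fin r)),
      (B.toSquareBlock (bres r N hr) ν).det
        = (∏ i : Fin (Cset r N hr a ν).card,
            (X (↑(eIso r N hr a ν i) : Fin N) : MvPolynomial (Fin N) ℂ) ^ (ν:ℕ))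
          * ∏ i : Fin (Cset r N hr a ν).card, ∏ j ∈ Finset.Ioi i,
              ((X (↑(eIso r N hr a ν j) : Fin N) : MvPolynomial (Fin N) ℂ) ^ r
                - (X (↑(eIso r N hr a ν i) : Fin N) : MvPolynomial (Fin N) ℂ) ^ r) := by
    intro ν _
    have hEiff : ∀ I : Fin N, mres r N hr a I = ν ↔ bres r N hr (σ0 I) = ν := by
      intro I
      rw [hbσ]
    set E : Fin (Cset r N hr a ν).card ≃ {k : Fin N // bres r N hr k = ν} :=
      (eIso r N hr a ν).toEquiv.trans
        ((Equiv.subtypeEquivRight (fun I => mem_Cset r N hr a)).trans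
          (Equiv.subtypeEquiv σ0 hEiff)) with hE
    have hEapp : ∀ i, ((E i : {k : Fin N // bres r N hr k = ν}) : Fin N)
        = σ0 (↑(eIso r N hr a ν i) : Fin N) := fun i => rfl
    rw [← Matrix.det_submatrix_equiv_self E]
    have hmat : ((B.toSquareBlock (bres r N hr) ν).submatrix E E)
        = Matrix.of (fun i j =>
            ((X (↑(eIso r N hr a ν i) : Fin N) : MvPolynomial (Fin N) ℂ) ^ (ν:ℕ))
              * (Matrix.vandermonde
                  (fun i => (X (↑(eIso r N hr a ν i) : Fin N) : MvPolynomial (Fin N) ℂ) ^ r)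
                  i j)) := by
      apply Matrix.ext
      intro i j
      show B ((E i : {k : Fin N // bres r N hr k = ν}) : Fin N)
          ((E j : {k : Fin N // bres r N hr k = ν}) : Fin N) = _
      rw [hEapp i, hEapp j, hBentry, Equiv.symm_apply_apply]
      have hIimem : mres r N hr a (↑(eIso r N hr a ν i) : Fin N) = ν :=
        (mem_Cset r N hr a).mp (eIso r N hr a ν i).2
      have hIjmem : mres r N hr a (↑(eIso r N hr a ν j) : Fin N) = ν :=
        (mem_Cset r N hr a).mp (eIso r N hr a ν j).2
      have hexp : ((σ0 (↑(eIso r N hr a ν j) : Fin N) : Fin N) : ℕ) = r * (j:ℕ) + (ν:ℕ) := by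
        rw [hσ0val]
        exact sN_rank r N hr a ν j
      have hcond : (((σ0 (↑(eIso r N hr a ν j) : Fin N) : Fin N) : ℕ) : ℤ) % r
          = a (↑(eIso r N hr a ν i) : Fin N) % r := by
        rw [hexp]
        have h5 : a (↑(eIso r N hr a ν i) : Fin N) % r = (((ν : Fin r) : ℕ) : ℤ) := by
          rw [amod_mres r N hr a, hIimem]
        rw [h5]
        push_cast
        rw [add_comm, Int.add_mul_emod_self_left]
        exact Int.emod_eq_of_lt (by positivity) (by exact_mod_cast ν.is_lt)
      rw [if_pos hcond, hexp, pow_add, pow_mul]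
      simp only [Matrix.of_apply, Matrix.vandermonde_apply]
      ring
    rw [hmat, Matrix.det_mul_column, Matrix.det_vandermonde]
  have hs : Equiv.Perm.sign σ0.symm = Equiv.Perm.sign σ0 := by
    rw [show σ0.symm = σ0⁻¹ from rfl, Equiv.Perm.sign_inv]
  have hp := Matrix.det_permute (σ0.symm) (Amat r N a)
  have hdetA : (Amat r N a).det
      = ((Equiv.Perm.sign σ0 : ℤ) : MvPolynomial (Fin N) ℂ) * B.det := by
    have hss : ((Equiv.Perm.sign σ0 : ℤ) : MvPolynomial (Fin N) ℂ)
        * ((Equiv.Perm.sign σ0 : ℤ) : MvPolynomial (Fin N) ℂ) = 1 := by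
      rcases Int.units_eq_one_or (Equiv.Perm.sign σ0) with h1 | h1 <;> rw [h1] <;> norm_num
    rw [hB, hp, hs, ← mul_assoc, hss, one_mul]
  rw [hdetA, hdetB, Finset.prod_congr rfl hblock, Finset.prod_mul_distrib,
    P1 r N hr a, P2 r N hr a, mul_assoc]

end Main

end VPAux

theorem vandermonde_projection (r N : ℕ) (hr : 0 < r) (a : Fin N → ℤ) :
    proj r N a
        (∏ q ∈ Finset.univ.filter (fun q : Fin N × Fin N => q.2 < q.1), (X q.1 - X q.2)) =
      C (deltaA r N a) * (∏ I : Fin N, X I ^ (a I % r).toNat) *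
        ∏ q ∈ Finset.univ.filter
            (fun q : Fin N × Fin N => q.2 < q.1 ∧ a q.1 % r = a q.2 % r),
          (X q.1 ^ r - X q.2 ^ r) := by
  classical
  rw [VPAux.proj_eq_det r N hr a]
  by_cases h : ∀ I, VPAux.sN r N a I < N
  · have hinj : Function.Injective (fun I : Fin N => (⟨VPAux.sN r N a I, h I⟩ : Fin N)) := by
      intro I J hIJ
      exact VPAux.sN_inj r N hr a (by simpa [Fin.ext_iff] using hIJ)
    have hb : Function.Bijective (fun I : Fin N => (⟨VPAux.sN r N a I, h I⟩ : Fin N)) :=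
      ⟨hinj, Finite.surjective_of_injective hinj⟩
    rw [VPAux.det_main r N hr a h hb, VPAux.deltaA_def, dif_pos h, dif_pos hb, map_intCast]
    congr!
  · rw [VPAux.det_zero r N hr a h, VPAux.deltaA_def, dif_neg h, map_zero, zero_mul, zero_mul]
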